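/- Let T be a nonnegative random variable with 0 < E[T] < ∞, and for each q > 0 let e_q be a random variable with the exponential distribution of rate q, independent of T. Then for every θ > 0, lim_{q↓0} E[e^{−θ e_q} · 1{T > e_q}] / P(T > e_q) = (1 − E[e^{−θT}]) / (θ · E[T]). In other words, the conditional law of e_q given {T > e_q} converges, as q ↓ 0, to the residual-life distribution associated with T. -/

import Mathlib

open MeasureTheory ProbabilityTheory Real Set Filter

lemma expMeasure_Iio_eq {q : ℝ} (hq : 0 < q) (t : ℝ) :
    expMeasure q (Iio t) = ENNReal.ofReal (1 - Real.exp (-(q * t))) := by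
  rw [expMeasure, gammaMeasure, withDensity_apply _ measurableSet_Iio,
    show gammaPDF 1 q = exponentialPDF q from rfl,
    setLIntegral_congr Iio_ae_eq_Iic, lintegral_exponentialPDF_eq_antiDeriv hq]
  by_cases h : 0 ≤ t
  · rw [if_pos h]
  · rw [if_neg h]
    rw [ENNReal.ofReal_zero]
    symm
    rw [ENNReal.ofReal_eq_zero]
    have : (1:ℝ) ≤ Real.exp (-(q*t)) := Real.one_le_exp (by nlinarith)
    linarith

lemma lintegral_exp_Iio_expMeasure {q θ : ℝ} (hq : 0 < q) (hθ : 0 < θ) (t : ℝ) :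
    ∫⁻ e in Iio t, ENNReal.ofReal (Real.exp (-(θ * e))) ∂(expMeasure q)
      = ENNReal.ofReal ((q/(q+θ)) * (1 - Real.exp (-((q+θ)*t)))) := by
  have hs : 0 < q + θ := by linarith
  have hpdf : Measurable (exponentialPDF q) :=
    (measurable_exponentialPDFReal q).ennreal_ofReal
  have hg : Measurable fun e : ℝ => ENNReal.ofReal (Real.exp (-(θ * e))) :=
    ((measurable_id.const_mul θ).neg.exp).ennreal_ofReal
  rw [expMeasure, gammaMeasure, show gammaPDF 1 q = exponentialPDF q from rfl,
    restrict_withDensity measurableSet_Iio,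
    lintegral_withDensity_eq_lintegral_mul _ hpdf hg]
  simp only [Pi.mul_apply]
  by_cases ht : t ≤ 0
  · have hzero : ∫⁻ e in Iio t,
        exponentialPDF q e * ENNReal.ofReal (Real.exp (-(θ * e))) ∂volume = 0 := by
      rw [setLIntegral_congr_fun measurableSet_Iio
        (fun e (he : e < t) => by
          rw [exponentialPDF_of_neg (lt_of_lt_of_le he ht), zero_mul])]
      simp
    rw [hzero]
    symm
    rw [ENNReal.ofReal_eq_zero]
    have h1 : (1:ℝ) ≤ Real.exp (-((q+θ)*t)) := Real.one_le_exp (by nlinarith)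
    have h2 : 0 ≤ q/(q+θ) := by positivity
    nlinarith
  · push_neg at ht
    have hsplit : Iio t = Iio 0 ∪ Ico 0 t := by
      ext e
      simp only [mem_Iio, mem_union, mem_Ico]
      constructor
      · intro h
        rcases lt_or_ge e 0 with h0 | h0
        · exact Or.inl h0
        · exact Or.inr ⟨h0, h⟩
      · rintro (h | ⟨h1, h2⟩)
        · exact h.trans ht
        · exact h2
    have hdisj : Disjoint (Iio (0:ℝ)) (Ico 0 t) :=
      (Set.Iio_disjoint_Ici le_rfl).mono_right Ico_subset_Ici_self
    rw [hsplit, lintegral_union measurableSet_Ico hdisj]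
    have hzero : ∫⁻ e in Iio (0:ℝ),
        exponentialPDF q e * ENNReal.ofReal (Real.exp (-(θ * e))) ∂volume = 0 := by
      rw [setLIntegral_congr_fun measurableSet_Iio
        (fun e (he : e < 0) => by
          rw [exponentialPDF_of_neg he, zero_mul])]
      simp
    rw [hzero, zero_add]
    have hcongr : ∫⁻ e in Ico (0:ℝ) t,
        exponentialPDF q e * ENNReal.ofReal (Real.exp (-(θ * e))) ∂volume
        = ∫⁻ e in Ico (0:ℝ) t, ENNReal.ofReal (q * Real.exp (-((q+θ)*e))) ∂volume := by
      refine setLIntegral_congr_fun measurableSet_Ico (fun e he => ?_)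
      rw [exponentialPDF_of_nonneg he.1, ← ENNReal.ofReal_mul (by positivity)]
      congr 1
      rw [mul_assoc, ← Real.exp_add, show -(q*e) + -(θ*e) = -((q+θ)*e) by ring]
    rw [hcongr]
    have hcont : Continuous fun e : ℝ => q * Real.exp (-((q+θ)*e)) := by
      continuity
    have hint : IntegrableOn (fun e : ℝ => q * Real.exp (-((q+θ)*e))) (Ico 0 t) volume :=
      (hcont.integrableOn_Icc).mono_set Ico_subset_Icc_self
    rw [← ofReal_integral_eq_lintegral_ofReal hint (ae_of_all _ (fun e => by positivity))]
    congr 1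
    have hderiv : ∀ e ∈ uIcc (0:ℝ) t,
        HasDerivAt (fun a : ℝ => (q/(q+θ)) * -Real.exp (-((q+θ)*a)))
          (q * Real.exp (-((q+θ)*e))) e := by
      intro e _
      have h := (hasDerivAt_neg_exp_mul_exp (r := q+θ) (x := e)).const_mul (q/(q+θ))
      rw [← mul_assoc, div_mul_cancel₀ _ (ne_of_gt hs)] at h
      exact h
    rw [setIntegral_congr_set Ico_ae_eq_Ioc, ← intervalIntegral.integral_of_le ht.le,
      intervalIntegral.integral_eq_sub_of_hasDerivAt hderiv (hcont.intervalIntegrable 0 t)]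
    simp only [mul_zero, neg_zero, Real.exp_zero]
    ring

/-- Let `T ≥ 0` with `0 < 𝔼[T] < ∞`, and for each `q > 0` let `E q` be an exponential random
variable of rate `q` independent of `T`. Then for every `θ > 0`,
`𝔼[e^{-θ E_q} ; T > E_q] / P(T > E_q) → (1 - 𝔼[e^{-θ T}]) / (θ 𝔼[T])` as `q ↓ 0`:
the conditional law of `E_q` given `{T > E_q}` converges to the residual-life
distribution of `T`. -/
theorem cond_exponential_tendsto_residual_life
    {Ω : Type*} [MeasureSpace Ω] [IsProbabilityMeasure (ℙ : Measure Ω)]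
    (T : Ω → ℝ) (hT : Measurable T) (hT0 : ∀ᵐ ω ∂ℙ, 0 ≤ T ω)
    (hTint : Integrable T ℙ) (hTpos : 0 < ∫ ω, T ω ∂ℙ)
    (E : ℝ → Ω → ℝ) (hE : ∀ q, 0 < q → Measurable (E q))
    (hindep : ∀ q, 0 < q → IndepFun T (E q) ℙ)
    (hEq : ∀ q, 0 < q → Measure.map (E q) ℙ = expMeasure q)
    (θ : ℝ) (hθ : 0 < θ) :
    Tendsto
      (fun q : ℝ =>
        (∫ ω in {ω | E q ω < T ω}, Real.exp (-(θ * E q ω)) ∂ℙ) /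
          (ℙ {ω | E q ω < T ω}).toReal)
      (nhdsWithin 0 (Ioi 0))
      (nhds ((1 - ∫ ω, Real.exp (-(θ * T ω)) ∂ℙ) / (θ * ∫ ω, T ω ∂ℙ))) := by
  set μ : Measure ℝ := Measure.map T ℙ with hμdef
  haveI : IsProbabilityMeasure μ := Measure.isProbabilityMeasure_map hT.aemeasurable
  have hμ0 : ∀ᵐ t ∂μ, 0 ≤ t := by
    rw [hμdef, ae_map_iff hT.aemeasurable measurableSet_Ici]
    exact hT0
  -- the Laplace-type functional
  set A : ℝ → ℝ := fun s => ∫ t, (1 - Real.exp (-(s*t))) ∂μ with hAdef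
  have hbdd : ∀ (f : ℝ → ℝ) (C : ℝ), AEStronglyMeasurable f μ →
      (∀ᵐ t ∂μ, ‖f t‖ ≤ C) → Integrable f μ :=
    fun f C hm hb => Integrable.mono' (integrable_const C) hm hb
  have hAmeas : ∀ s : ℝ, AEStronglyMeasurable (fun t => 1 - Real.exp (-(s*t))) μ :=
    fun s => (continuous_const.sub ((continuous_const.mul continuous_id).neg.rexp)).aestronglyMeasurable
  have hAbound : ∀ s : ℝ, 0 < s → ∀ᵐ t ∂μ, ‖1 - Real.exp (-(s*t))‖ ≤ 1 := by
    intro s hs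
    filter_upwards [hμ0] with t ht
    have h1 : Real.exp (-(s*t)) ≤ 1 := Real.exp_le_one_iff.mpr (by nlinarith)
    have h2 : 0 < Real.exp (-(s*t)) := Real.exp_pos _
    have h2 := Real.exp_pos (-(s*t))
    have h3 : |1 - Real.exp (-(s*t))| ≤ 1 := by
      rw [abs_le]
      constructor <;> nlinarith
    simpa [Real.norm_eq_abs] using h3
  have hAint : ∀ s : ℝ, 0 < s → Integrable (fun t => 1 - Real.exp (-(s*t))) μ :=
    fun s hs => hbdd _ 1 (hAmeas s) (hAbound s hs)
  have hAnonneg : ∀ s : ℝ, 0 < s → 0 ≤ A s := by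
    intro s hs
    refine integral_nonneg_of_ae ?_
    filter_upwards [hμ0] with t ht
    simp only [Pi.zero_apply]
    have : Real.exp (-(s*t)) ≤ 1 := Real.exp_le_one_iff.mpr (by nlinarith)
    linarith
  -- identification of numerator and denominator
  have hkey : ∀ q : ℝ, 0 < q →
      (∫ ω in {ω | E q ω < T ω}, Real.exp (-(θ * E q ω)) ∂ℙ) = (q/(q+θ)) * A (q+θ) ∧
      (ℙ {ω | E q ω < T ω}).toReal = A q := by
    intro q hq
    haveI : IsProbabilityMeasure (expMeasure q) := isProbabilityMeasure_expMeasure hq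
    have hs : 0 < q + θ := by linarith
    set U : Set (ℝ × ℝ) := {p : ℝ × ℝ | p.2 < p.1} with hUdef
    have hU : MeasurableSet U := measurableSet_lt measurable_snd measurable_fst
    have hpair : Measurable fun ω => (T ω, E q ω) := hT.prodMk (hE q hq)
    have hmap : Measure.map (fun ω => (T ω, E q ω)) ℙ = μ.prod (expMeasure q) := by
      rw [(indepFun_iff_map_prod_eq_prod_map_map hT.aemeasurable
        (hE q hq).aemeasurable).mp (hindep q hq), hEq q hq]
    have hSeq : {ω | E q ω < T ω} = (fun ω => (T ω, E q ω)) ⁻¹' U := rfl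
    have hS : MeasurableSet {ω | E q ω < T ω} := by rw [hSeq]; exact hpair hU
    constructor
    · -- numerator
      have hg : Measurable fun p : ℝ × ℝ =>
          U.indicator (fun p : ℝ × ℝ => ENNReal.ofReal (Real.exp (-(θ * p.2)))) p :=
        Measurable.indicator ((measurable_snd.const_mul θ).neg.exp.ennreal_ofReal) hU
      have step1 : (∫ ω in {ω | E q ω < T ω}, Real.exp (-(θ * E q ω)) ∂ℙ)
          = (∫⁻ ω in {ω | E q ω < T ω}, ENNReal.ofReal (Real.exp (-(θ * E q ω))) ∂ℙ).toReal := by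
        rw [integral_eq_lintegral_of_nonneg_ae (f := fun ω => Real.exp (-(θ * E q ω))) (ae_of_all _ (fun ω => (Real.exp_pos _).le))
          (((hE q hq).const_mul θ).neg.exp.aestronglyMeasurable)]
      have step2 : (∫⁻ ω in {ω | E q ω < T ω}, ENNReal.ofReal (Real.exp (-(θ * E q ω))) ∂ℙ)
          = ∫⁻ p, U.indicator (fun p : ℝ × ℝ => ENNReal.ofReal (Real.exp (-(θ * p.2)))) p
              ∂(μ.prod (expMeasure q)) := by
        rw [← hmap, lintegral_map hg hpair, ← lintegral_indicator hS _]
        refine lintegral_congr (fun ω => ?_)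
        rcases lt_or_ge (E q ω) (T ω) with hω | hω
        · rw [Set.indicator_of_mem (show ω ∈ {ω | E q ω < T ω} from hω),
            Set.indicator_of_mem (show (T ω, E q ω) ∈ U from hω)]
        · rw [Set.indicator_of_notMem
              (show ω ∉ {ω | E q ω < T ω} from not_lt.mpr hω),
            Set.indicator_of_notMem (show (T ω, E q ω) ∉ U from not_lt.mpr hω)]
      have step3 : (∫⁻ p, U.indicator (fun p : ℝ × ℝ =>
            ENNReal.ofReal (Real.exp (-(θ * p.2)))) p ∂(μ.prod (expMeasure q)))
          = ∫⁻ t, ENNReal.ofReal ((q/(q+θ)) * (1 - Real.exp (-((q+θ)*t)))) ∂μ := by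
        rw [MeasureTheory.lintegral_prod _ hg.aemeasurable]
        congr 1
        funext t
        have : (fun e => U.indicator (fun p : ℝ × ℝ =>
            ENNReal.ofReal (Real.exp (-(θ * p.2)))) (t, e))
            = (Iio t).indicator (fun e => ENNReal.ofReal (Real.exp (-(θ * e)))) := by
          funext e
          by_cases he : e < t
          · simp only [Set.indicator_of_mem (show (t, e) ∈ U from he),
              Set.indicator_of_mem (show e ∈ Iio t from he)]
          · simp only [Set.indicator_of_notMem (show (t, e) ∉ U from he),
              Set.indicator_of_notMem (show e ∉ Iio t from he)]
        rw [this, lintegral_indicator measurableSet_Iio _,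
          lintegral_exp_Iio_expMeasure hq hθ t]
      have step4 : (∫⁻ t, ENNReal.ofReal ((q/(q+θ)) * (1 - Real.exp (-((q+θ)*t)))) ∂μ)
          = ENNReal.ofReal ((q/(q+θ)) * A (q+θ)) := by
        rw [← ofReal_integral_eq_lintegral_ofReal
          ((hAint (q+θ) hs).const_mul _)
          (by filter_upwards [hμ0] with t ht
              simp only [Pi.zero_apply]
              have : Real.exp (-((q+θ)*t)) ≤ 1 := Real.exp_le_one_iff.mpr (by nlinarith)
              have h2 : 0 ≤ q/(q+θ) := by positivity
              nlinarith)]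
        rw [hAdef]
        congr 1
        exact integral_const_mul _ _
      rw [step1, step2, step3, step4, ENNReal.toReal_ofReal
        (mul_nonneg (by positivity) (hAnonneg _ hs))]
    · -- denominator
      have hcalc : ℙ {ω | E q ω < T ω} = ENNReal.ofReal (A q) := by
        rw [hSeq, ← Measure.map_apply hpair hU, hmap, Measure.prod_apply hU]
        have : (fun t => expMeasure q (Prod.mk t ⁻¹' U))
            = fun t => ENNReal.ofReal (1 - Real.exp (-(q*t))) := by
          funext t
          have : Prod.mk t ⁻¹' U = Iio t := rfl
          rw [this, expMeasure_Iio_eq hq]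
        rw [this, ← ofReal_integral_eq_lintegral_ofReal (hAint q hq)
          (by filter_upwards [hμ0] with t ht
              simp only [Pi.zero_apply]
              have : Real.exp (-(q*t)) ≤ 1 := Real.exp_le_one_iff.mpr (by nlinarith)
              linarith)]
      rw [hcalc, ENNReal.toReal_ofReal (hAnonneg q hq)]
  -- limit of A (q + θ)
  have hlim1 : Tendsto (fun q => A (q+θ)) (nhdsWithin 0 (Ioi 0)) (nhds (A θ)) := by
    refine tendsto_integral_filter_of_dominated_convergence (fun _ => (1:ℝ))
      (Eventually.of_forall (fun q => hAmeas (q+θ)))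
      ?_ (integrable_const 1) ?_
    · filter_upwards [self_mem_nhdsWithin] with q (hq : 0 < q)
      exact hAbound (q+θ) (by linarith)
    · refine ae_of_all _ (fun t => ?_)
      have : Tendsto (fun q : ℝ => 1 - Real.exp (-((q+θ)*t))) (nhds 0)
          (nhds (1 - Real.exp (-((0+θ)*t)))) := by
        exact (continuous_const.sub
          (((continuous_id.add continuous_const).mul continuous_const).neg.rexp)).tendsto 0
      rw [zero_add] at this
      exact this.mono_left nhdsWithin_le_nhds
  -- limit of A q / q
  have hid_int : Integrable (fun t : ℝ => t) μ := by
    rw [hμdef]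
    exact (integrable_map_measure aestronglyMeasurable_id hT.aemeasurable).mpr hTint
  have hμmean : ∫ t, t ∂μ = ∫ ω, T ω ∂ℙ := by
    rw [hμdef]
    exact integral_map hT.aemeasurable aestronglyMeasurable_id
  have hlim2 : Tendsto (fun q => A q / q) (nhdsWithin 0 (Ioi 0)) (nhds (∫ t, t ∂μ)) := by
    have heq : ∀ q : ℝ, A q / q = ∫ t, (1 - Real.exp (-(q*t)))/q ∂μ := by
      intro q
      rw [hAdef, integral_div]
    simp only [heq]
    refine tendsto_integral_filter_of_dominated_convergence (fun t => |t|)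
      (Eventually.of_forall (fun q => ((continuous_const.sub ((continuous_const.mul continuous_id).neg.rexp)).div_const q).aestronglyMeasurable))
      ?_ hid_int.abs ?_
    · filter_upwards [self_mem_nhdsWithin] with q (hq : 0 < q)
      filter_upwards [hμ0] with t ht
      have h1 : Real.exp (-(q*t)) ≤ 1 := Real.exp_le_one_iff.mpr (by nlinarith)
      have h2 : 1 - q*t ≤ Real.exp (-(q*t)) := by
        have := Real.add_one_le_exp (-(q*t))
        linarith
      rw [Real.norm_eq_abs, abs_le]
      constructor
      · have : 0 ≤ (1 - Real.exp (-(q*t)))/q := div_nonneg (by linarith) hq.le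
        have habs : 0 ≤ |t| := abs_nonneg t
        linarith
      · have hle : (1 - Real.exp (-(q*t)))/q ≤ t := by
          rw [div_le_iff₀ hq]
          nlinarith
        exact hle.trans (le_abs_self t)
    · refine ae_of_all _ (fun t => ?_)
      have hder : HasDerivAt (fun q : ℝ => 1 - Real.exp (-(q*t))) t 0 := by
        have h1 : HasDerivAt (fun q : ℝ => q * t) t 0 := hasDerivAt_mul_const t
        have h2 := (h1.neg).exp
        have h3 := h2.const_sub 1
        simpa using h3
      have hslope := hasDerivAt_iff_tendsto_slope.mp hder
      have hmono : nhdsWithin (0:ℝ) (Ioi 0) ≤ nhdsWithin 0 {(0:ℝ)}ᶜ :=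
        nhdsWithin_mono 0 (fun x hx => ne_of_gt hx)
      refine Tendsto.congr' ?_ (hslope.mono_left hmono)
      filter_upwards [self_mem_nhdsWithin] with q (hq : 0 < q)
      rw [slope_def_field]
      simp
  -- assemble
  have hTne : (∫ t, t ∂μ) ≠ 0 := by rw [hμmean]; exact ne_of_gt hTpos
  have hfinal : Tendsto (fun q => (A (q+θ) / (q+θ)) / (A q / q)) (nhdsWithin 0 (Ioi 0))
      (nhds ((A θ / θ) / (∫ t, t ∂μ))) := by
    refine Tendsto.div ?_ hlim2 hTne
    have htq : Tendsto (fun q : ℝ => q + θ) (nhdsWithin 0 (Ioi 0)) (nhds θ) := by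
      have h : Tendsto (fun q : ℝ => q + θ) (nhds 0) (nhds (0 + θ)) :=
        Continuous.tendsto (by continuity) 0
      rw [zero_add] at h
      exact h.mono_left nhdsWithin_le_nhds
    exact hlim1.div htq (ne_of_gt hθ)
  have hAθ : A θ = 1 - ∫ ω, Real.exp (-(θ * T ω)) ∂ℙ := by
    have hexp_int : Integrable (fun t => Real.exp (-(θ*t))) μ := by
      refine hbdd _ 1 ((continuous_const.mul continuous_id).neg.rexp.aestronglyMeasurable) ?_
      filter_upwards [hμ0] with t ht
      rw [Real.norm_eq_abs, abs_of_pos (Real.exp_pos _)]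
      exact Real.exp_le_one_iff.mpr (by nlinarith)
    have : A θ = ∫ t, (1:ℝ) ∂μ - ∫ t, Real.exp (-(θ*t)) ∂μ := by
      rw [hAdef]
      exact integral_sub (integrable_const 1) hexp_int
    have hone : ∫ t, (1:ℝ) ∂μ = 1 := by simp
    rw [this, hone]
    congr 1
    rw [hμdef]
    exact integral_map hT.aemeasurable
      ((continuous_const.mul continuous_id).neg.rexp.aestronglyMeasurable)
  have htarget : (A θ / θ) / (∫ t, t ∂μ)
      = (1 - ∫ ω, Real.exp (-(θ * T ω)) ∂ℙ) / (θ * ∫ ω, T ω ∂ℙ) := by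
    rw [hAθ, hμmean, div_div]
  rw [← htarget]
  refine Tendsto.congr' ?_ hfinal
  filter_upwards [self_mem_nhdsWithin] with q (hq : 0 < q)
  rw [(hkey q hq).1, (hkey q hq).2]
  rcases eq_or_ne (A q) 0 with h0 | h0
  · rw [h0]
    simp
  · have hqne : q ≠ 0 := ne_of_gt hq
    have hsne : q + θ ≠ 0 := by positivity
    field_simp
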